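/- arXiv:2604.26448 — 3 statements merged into one kernel-verified Lean document; each statement's English description precedes it below -/
import Mathlib

section
/- Let D₁, …, D_N ⊆ ℝⁿ be measurable sets with μ(⋃_j D_j) ≤ V and pairwise intersection bounds μ(D_j ∩ D_ℓ) ≤ c·δ²/(|j − ℓ| + 1) for all j, ℓ and some constants c, δ > 0. If ∑_j μ(D_j) ≥ S, then V ≥ S²/(c·δ²·N·(1 + 2·∑_{m=1}^{N} 1/m)) ≳ S²/(c·δ²·N·log(N+2)). -/
open Finset

lemma uvlb_sum_le (s : Finset ℕ) (N : ℕ) (e : ℕ → ℕ)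
    (hinj : ∀ x ∈ s, ∀ y ∈ s, e x = e y → x = y)
    (hmem : ∀ x ∈ s, e x ∈ Finset.Icc 1 N) :
    ∑ l ∈ s, (1:ℝ)/((e l : ℝ)) ≤ ∑ m ∈ Finset.Icc 1 N, (1:ℝ)/(m:ℝ) := by
  rw [show (∑ l ∈ s, (1:ℝ)/((e l : ℕ):ℝ)) = ∑ m ∈ s.image e, (1:ℝ)/(m:ℝ) from
    (Finset.sum_image (f := fun m : ℕ => (1:ℝ)/(m:ℝ)) (g := e) hinj).symm]
  exact Finset.sum_le_sum_of_subset_of_nonneg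
    (fun m hm => by obtain ⟨x, hx, rfl⟩ := Finset.mem_image.mp hm; exact hmem x hx)
    (fun i _ _ => by positivity)

lemma uvlb_inner (N j : ℕ) (hj : j < N) :
    ∑ l ∈ Finset.range N, (1:ℝ)/(|(j:ℝ)-(l:ℝ)|+1)
      ≤ 1 + 2 * ∑ m ∈ Finset.Icc 1 N, (1:ℝ)/(m:ℝ) := by
  have hsplit : ∑ l ∈ Finset.range N, (1:ℝ)/(|(j:ℝ)-(l:ℝ)|+1)
      = (∑ l ∈ Finset.range j, (1:ℝ)/(|(j:ℝ)-(l:ℝ)|+1))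
        + ((1:ℝ)/(|(j:ℝ)-(j:ℝ)|+1) + ∑ l ∈ Finset.Ico (j+1) N, (1:ℝ)/(|(j:ℝ)-(l:ℝ)|+1)) := by
    rw [Finset.range_eq_Ico, ← Finset.sum_Ico_consecutive _ (Nat.zero_le j) hj.le,
      Finset.sum_eq_sum_Ico_succ_bot hj, Finset.range_eq_Ico]
  rw [hsplit]
  have h1 : ∑ l ∈ Finset.range j, (1:ℝ)/(|(j:ℝ)-(l:ℝ)|+1)
      ≤ ∑ m ∈ Finset.Icc 1 N, (1:ℝ)/(m:ℝ) := by
    have heq : ∀ l ∈ Finset.range j, (1:ℝ)/(|(j:ℝ)-(l:ℝ)|+1) = 1/(((j-l+1 : ℕ)):ℝ) := by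
      intro l hl
      have hlj : l ≤ j := (Finset.mem_range.mp hl).le
      rw [abs_of_nonneg (by exact sub_nonneg.mpr (Nat.cast_le.mpr hlj))]
      push_cast [hlj]
      ring_nf
    rw [Finset.sum_congr rfl heq]
    exact uvlb_sum_le _ N _ (fun x hx y hy h => by
        simp only [Finset.mem_range] at hx hy; omega)
      (fun x hx => by simp only [Finset.mem_range] at hx; simp only [Finset.mem_Icc]; omega)
  have h2 : ∑ l ∈ Finset.Ico (j+1) N, (1:ℝ)/(|(j:ℝ)-(l:ℝ)|+1)
      ≤ ∑ m ∈ Finset.Icc 1 N, (1:ℝ)/(m:ℝ) := by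
    have heq : ∀ l ∈ Finset.Ico (j+1) N, (1:ℝ)/(|(j:ℝ)-(l:ℝ)|+1) = 1/(((l-j+1 : ℕ)):ℝ) := by
      intro l hl
      have hlj : j ≤ l := by have := (Finset.mem_Ico.mp hl).1; omega
      rw [abs_sub_comm, abs_of_nonneg (by exact sub_nonneg.mpr (Nat.cast_le.mpr hlj))]
      push_cast [hlj]
      ring_nf
    rw [Finset.sum_congr rfl heq]
    exact uvlb_sum_le _ N _ (fun x hx y hy h => by
        simp only [Finset.mem_Ico] at hx hy; omega)
      (fun x hx => by simp only [Finset.mem_Ico] at hx; simp only [Finset.mem_Icc]; omega)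
  have : (1:ℝ)/(|(j:ℝ)-(j:ℝ)|+1) = 1 := by simp
  rw [this]
  linarith

open MeasureTheory
open scoped ENNReal

theorem union_volume_lower_bound :
    ∃ C : ℝ, 0 < C ∧ ∀ (n N : ℕ) (D : Fin N → Set (EuclideanSpace ℝ (Fin n)))
      (V S c δ : ℝ), 1 ≤ N → 0 < c → 0 < δ → 0 < S →
      (∀ j, MeasurableSet (D j)) →
      volume (⋃ j, D j) ≤ ENNReal.ofReal V →
      (∀ j l : Fin N,
        volume (D j ∩ D l) ≤ ENNReal.ofReal (c * δ^2 / (|((j:ℕ):ℝ) - ((l:ℕ):ℝ)| + 1))) →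
      ENNReal.ofReal S ≤ ∑ j, volume (D j) →
      S^2 / (c * δ^2 * N * (1 + 2 * ∑ m ∈ Finset.Icc 1 N, (1:ℝ)/(m:ℝ))) ≤ V ∧
      S^2 / (C * c * δ^2 * N * Real.log ((N:ℝ)+2)) ≤ V := by
  refine ⟨5, by norm_num, ?_⟩
  intro n N D V S c δ hN hc hδ hS hD hV hint hsum
  set μ : Measure (EuclideanSpace ℝ (Fin n)) := volume with hμ
  set U : Set (EuclideanSpace ℝ (Fin n)) := ⋃ j, D j with hUdef
  have hU : MeasurableSet U := MeasurableSet.iUnion hD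
  set H : ℝ := ∑ m ∈ Finset.Icc 1 N, (1:ℝ)/(m:ℝ) with hHdef
  have hH0 : 0 ≤ H := Finset.sum_nonneg fun i _ => by positivity
  have hNpos : (0:ℝ) < N := by exact_mod_cast hN
  set A : ℝ := c * δ^2 * N * (1 + 2 * H) with hAdef
  have hA : 0 < A := by
    have : (0:ℝ) < 1 + 2 * H := by linarith
    positivity
  -- the functions
  set f : EuclideanSpace ℝ (Fin n) → ℝ≥0∞ :=
    fun x => ∑ j : Fin N, (D j).indicator 1 x with hfdef
  set g : EuclideanSpace ℝ (Fin n) → ℝ≥0∞ := U.indicator 1 with hgdef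
  have hfm : Measurable f := Finset.measurable_sum _ fun j _ => measurable_one.indicator (hD j)
  have hgm : Measurable g := measurable_one.indicator hU
  have hfg : ∀ x, (f * g) x = f x := by
    intro x
    by_cases hx : x ∈ U
    · simp [hgdef, Set.indicator_of_mem hx]
    · have hfx : f x = 0 := Finset.sum_eq_zero fun j _ =>
        Set.indicator_of_notMem (fun hj => hx (Set.mem_iUnion.mpr ⟨j, hj⟩)) _
      simp [hfx]
  have hint_f : ∫⁻ x, f x ∂μ = ∑ j, μ (D j) := by
    rw [lintegral_finset_sum _ fun j _ => measurable_one.indicator (hD j)]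
    simp_rw [lintegral_indicator_one (hD _)]
  have hf2 : ∀ x, f x ^ (2:ℝ) = ∑ j : Fin N, ∑ l : Fin N, (D j ∩ D l).indicator 1 x := by
    intro x
    have h2 : ((2:ℝ)) = ((2:ℕ):ℝ) := by norm_num
    rw [h2, ENNReal.rpow_natCast, sq, hfdef, Finset.sum_mul_sum]
    refine Finset.sum_congr rfl fun j _ => Finset.sum_congr rfl fun l _ => ?_
    rw [Set.inter_indicator_one]
    rfl
  have hint_f2 : ∫⁻ x, f x ^ (2:ℝ) ∂μ = ∑ j : Fin N, ∑ l : Fin N, μ (D j ∩ D l) := by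
    simp_rw [hf2]
    rw [lintegral_finset_sum _ fun j _ =>
      Finset.measurable_sum _ fun l _ => measurable_one.indicator ((hD j).inter (hD l))]
    refine Finset.sum_congr rfl fun j _ => ?_
    rw [lintegral_finset_sum _ fun l _ => measurable_one.indicator ((hD j).inter (hD l))]
    simp_rw [lintegral_indicator_one ((hD _).inter (hD _))]
  have hint_g2 : ∫⁻ x, g x ^ (2:ℝ) ∂μ = μ U := by
    have hgx : ∀ x, g x ^ (2:ℝ) = U.indicator 1 x := by
      intro x
      by_cases hx : x ∈ U
      · simp [hgdef, Set.indicator_of_mem hx]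
      · simp [hgdef, Set.indicator_of_notMem hx, ENNReal.zero_rpow_of_pos (by norm_num : (0:ℝ) < 2)]
    simp_rw [hgx]
    exact lintegral_indicator_one hU
  have hconj : Real.HolderConjugate 2 2 := Real.HolderConjugate.two_two
  have holder := ENNReal.lintegral_mul_le_Lp_mul_Lq μ hconj hfm.aemeasurable hgm.aemeasurable
  rw [hint_f2, hint_g2] at holder
  have key : ∑ j, μ (D j) ≤
      (∑ j : Fin N, ∑ l : Fin N, μ (D j ∩ D l)) ^ ((1:ℝ)/2) * (μ U) ^ ((1:ℝ)/2) := by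
    calc ∑ j, μ (D j) = ∫⁻ x, (f * g) x ∂μ := by rw [lintegral_congr hfg, hint_f]
    _ ≤ _ := holder
  -- bound the double sum
  have hreal : ∑ j ∈ Finset.range N, ∑ l ∈ Finset.range N,
      c * δ^2 / (|(j:ℝ) - (l:ℝ)| + 1) ≤ A := by
    have hjbd : ∀ j ∈ Finset.range N, ∑ l ∈ Finset.range N,
        c * δ^2 / (|(j:ℝ) - (l:ℝ)| + 1) ≤ c * δ^2 * (1 + 2 * H) := by
      intro j hj
      have := uvlb_inner N j (Finset.mem_range.mp hj)
      calc ∑ l ∈ Finset.range N, c * δ^2 / (|(j:ℝ) - (l:ℝ)| + 1)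
          = c * δ^2 * ∑ l ∈ Finset.range N, 1 / (|(j:ℝ) - (l:ℝ)| + 1) := by
            rw [Finset.mul_sum]; refine Finset.sum_congr rfl fun l _ => by ring
        _ ≤ c * δ^2 * (1 + 2 * H) := by
            have hcd : (0:ℝ) ≤ c * δ^2 := by positivity
            exact mul_le_mul_of_nonneg_left this hcd
    calc ∑ j ∈ Finset.range N, ∑ l ∈ Finset.range N, c * δ^2 / (|(j:ℝ) - (l:ℝ)| + 1)
        ≤ ∑ j ∈ Finset.range N, c * δ^2 * (1 + 2 * H) := Finset.sum_le_sum hjbd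
      _ = A := by rw [Finset.sum_const, Finset.card_range, nsmul_eq_mul, hAdef]; ring
  have hsum_bound : ∑ j : Fin N, ∑ l : Fin N, μ (D j ∩ D l) ≤ ENNReal.ofReal A := by
    calc ∑ j : Fin N, ∑ l : Fin N, μ (D j ∩ D l)
        ≤ ∑ j : Fin N, ∑ l : Fin N,
            ENNReal.ofReal (c * δ^2 / (|((j:ℕ):ℝ) - ((l:ℕ):ℝ)| + 1)) :=
          Finset.sum_le_sum fun j _ => Finset.sum_le_sum fun l _ => hint j l
      _ = ENNReal.ofReal (∑ j : Fin N, ∑ l : Fin N,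
            c * δ^2 / (|((j:ℕ):ℝ) - ((l:ℕ):ℝ)| + 1)) := by
          rw [ENNReal.ofReal_sum_of_nonneg fun j _ => Finset.sum_nonneg fun l _ => by positivity]
          exact Finset.sum_congr rfl fun j _ =>
            (ENNReal.ofReal_sum_of_nonneg fun l _ => by positivity).symm
      _ ≤ ENNReal.ofReal A := by
          apply ENNReal.ofReal_le_ofReal
          calc ∑ j : Fin N, ∑ l : Fin N, c * δ^2 / (|((j:ℕ):ℝ) - ((l:ℕ):ℝ)| + 1)
              = ∑ j ∈ Finset.range N, ∑ l ∈ Finset.range N,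
                  c * δ^2 / (|(j:ℝ) - (l:ℝ)| + 1) := by
                rw [Finset.sum_range fun j => ∑ l ∈ Finset.range N,
                  c * δ^2 / (|(j:ℝ) - (l:ℝ)| + 1)]
                exact Finset.sum_congr rfl fun j _ =>
                  (Finset.sum_range fun l => c * δ^2 / (|((j:ℕ):ℝ) - (l:ℝ)| + 1)).symm
            _ ≤ A := hreal
  -- combine
  have chain : ENNReal.ofReal S ≤
      (ENNReal.ofReal A) ^ ((1:ℝ)/2) * (ENNReal.ofReal V) ^ ((1:ℝ)/2) := by
    refine le_trans (le_trans hsum key) ?_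
    exact mul_le_mul' (ENNReal.rpow_le_rpow hsum_bound (by norm_num))
      (ENNReal.rpow_le_rpow hV (by norm_num))
  have hsq : ENNReal.ofReal (S^2) ≤ ENNReal.ofReal (A * V) := by
    have h1 : ENNReal.ofReal (S^2) = ENNReal.ofReal S * ENNReal.ofReal S := by
      rw [sq, ENNReal.ofReal_mul hS.le]
    have h2 : ((ENNReal.ofReal A) ^ ((1:ℝ)/2) * (ENNReal.ofReal V) ^ ((1:ℝ)/2)) *
        ((ENNReal.ofReal A) ^ ((1:ℝ)/2) * (ENNReal.ofReal V) ^ ((1:ℝ)/2))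
        = ENNReal.ofReal A * ENNReal.ofReal V := by
      rw [mul_mul_mul_comm, ← ENNReal.rpow_add_of_nonneg _ _ (by norm_num) (by norm_num),
        ← ENNReal.rpow_add_of_nonneg _ _ (by norm_num) (by norm_num)]
      norm_num
    rw [h1, ENNReal.ofReal_mul hA.le, ← h2]
    exact mul_le_mul' chain chain
  have hS2 : S^2 ≤ A * V := by
    by_cases hAV : 0 ≤ A * V
    · exact (ENNReal.ofReal_le_ofReal_iff hAV).mp hsq
    · exfalso
      rw [ENNReal.ofReal_eq_zero.mpr (le_of_lt (not_le.mp hAV)), nonpos_iff_eq_zero,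
        ENNReal.ofReal_eq_zero] at hsq
      nlinarith
  have goal1 : S^2 / A ≤ V := by
    rw [div_le_iff₀ hA]
    nlinarith
  refine ⟨goal1, ?_⟩
  -- second bound
  have hlog1 : 1 ≤ Real.log ((N:ℝ)+2) := by
    rw [Real.le_log_iff_exp_le (by positivity)]
    calc Real.exp 1 ≤ 2.7182818286 := Real.exp_one_lt_d9.le
      _ ≤ (N:ℝ) + 2 := by
          have hN1 : (1:ℝ) ≤ N := by exact_mod_cast hN
          linarith
  have hHlog : H ≤ 1 + Real.log N := by
    have hHq : H = ((harmonic N : ℚ) : ℝ) := by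
      rw [harmonic_eq_sum_Icc]
      push_cast
      exact Finset.sum_congr rfl fun m _ => (one_div _)
    rw [hHq]
    exact harmonic_le_one_add_log N
  have hlogN : Real.log N ≤ Real.log ((N:ℝ)+2) :=
    Real.log_le_log hNpos (by linarith)
  have hden : A ≤ 5 * c * δ^2 * N * Real.log ((N:ℝ)+2) := by
    have h12H : 1 + 2 * H ≤ 5 * Real.log ((N:ℝ)+2) := by nlinarith
    have hcd : (0:ℝ) ≤ c * δ^2 * N := by positivity
    calc A = c * δ^2 * N * (1 + 2 * H) := rfl
      _ ≤ c * δ^2 * N * (5 * Real.log ((N:ℝ)+2)) := mul_le_mul_of_nonneg_left h12H hcd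
      _ = 5 * c * δ^2 * N * Real.log ((N:ℝ)+2) := by ring
  calc S^2 / (5 * c * δ^2 * N * Real.log ((N:ℝ)+2)) ≤ S^2 / A := by
        apply div_le_div_of_nonneg_left (by positivity) hA hden
    _ ≤ V := goal1
end

section
/- Let A ⊂ S^{n-2} ⊂ ℝ^{n-1} be a finite 2^{−k}-separated subset of the unit sphere with card(A) ≤ λ·2^{−kβ}·2^{k(n-2)}, where n ≥ 4. Then for every μ ∈ A, ∑_{ν ∈ A} 2^{−2k}/(2^k‖ν − μ‖ + 1) ≲ λ^{(n-3)/(n-2)}·2^{−kβ(n-3)/(n-2)}·2^{k(n-5)}, with implicit constant depending only on n. -/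
open MeasureTheory Metric Finset ENNReal RealInnerProductSpace

set_option maxHeartbeats 1000000

lemma packing {E : Type*} [NormedAddCommGroup E] [NormedSpace ℝ E] [MeasurableSpace E]
    [BorelSpace E] [FiniteDimensional ℝ E] [Nontrivial E]
    (μ : Measure E) [μ.IsAddHaarMeasure]
    (B : Finset E) (c : E) (s r : ℝ) (hs : 0 < s) (hr : 0 ≤ r)
    (hsep : ∀ x ∈ B, ∀ y ∈ B, x ≠ y → s ≤ dist x y)
    (hball : ∀ x ∈ B, dist x c ≤ r) :
    (B.card : ℝ) ≤ (2*r/s + 1) ^ (Module.finrank ℝ E) := by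
  have h2 : (0:ℝ) < s/2 := by linarith
  have hdisj : (↑B : Set E).PairwiseDisjoint (fun x => ball x (s/2)) := by
    intro x hx y hy hxy
    exact ball_disjoint_ball (by simpa using hsep x hx y hy hxy)
  have hsub : ∀ x ∈ B, ball x (s/2) ⊆ ball c (r + s/2) := by
    intro x hx z hz
    simp only [mem_ball] at hz ⊢
    have := hball x hx
    calc dist z c ≤ dist z x + dist x c := dist_triangle _ _ _
    _ < s/2 + r := by linarith
    _ = r + s/2 := by ring
  have hmeas : μ (⋃ x ∈ B, ball x (s/2)) = ∑ x ∈ B, μ (ball x (s/2)) :=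
    measure_biUnion_finset hdisj (fun x _ => measurableSet_ball)
  have hle : ∑ x ∈ B, μ (ball x (s/2)) ≤ μ (ball c (r + s/2)) := by
    rw [← hmeas]
    exact measure_mono (Set.iUnion₂_subset hsub)
  rw [Measure.addHaar_ball μ c (by linarith)] at hle
  have heach : ∀ x ∈ B, μ (ball x (s/2)) = ENNReal.ofReal ((s/2) ^ Module.finrank ℝ E) * μ (ball 0 1) :=
    fun x _ => Measure.addHaar_ball μ x h2.le
  rw [Finset.sum_congr rfl heach, Finset.sum_const, nsmul_eq_mul] at hle
  set V := μ (ball (0:E) 1) with hV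
  have hV0 : V ≠ 0 := (measure_ball_pos μ 0 one_pos).ne'
  have hVtop : V ≠ ⊤ := measure_ball_lt_top.ne
  have key : (B.card : ENNReal) * ENNReal.ofReal ((s/2) ^ Module.finrank ℝ E)
      ≤ ENNReal.ofReal ((r + s/2) ^ Module.finrank ℝ E) := by
    rw [← mul_assoc] at hle
    exact (ENNReal.mul_le_mul_iff_left hV0 hVtop).mp hle
  have hcard : (B.card : ℝ) * (s/2) ^ Module.finrank ℝ E ≤ (r + s/2) ^ Module.finrank ℝ E := by
    have := ENNReal.toReal_mono (by simp) key
    rwa [ENNReal.toReal_mul, ENNReal.toReal_natCast, ENNReal.toReal_ofReal (by positivity),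
      ENNReal.toReal_ofReal (by positivity)] at this
  have hpow : (0:ℝ) < (s/2) ^ Module.finrank ℝ E := by positivity
  rw [← le_div_iff₀ hpow] at hcard
  calc (B.card : ℝ) ≤ (r + s/2) ^ Module.finrank ℝ E / (s/2) ^ Module.finrank ℝ E := hcard
    _ = ((r + s/2)/(s/2)) ^ Module.finrank ℝ E := by rw [← div_pow]
    _ = (2*r/s + 1) ^ Module.finrank ℝ E := by
        congr 1
        field_simp

noncomputable def drop {d : ℕ} (i : Fin (d+1)) (x : EuclideanSpace ℝ (Fin (d+1))) :
    EuclideanSpace ℝ (Fin d) := WithLp.toLp 2 (fun j => x (i.succAbove j))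

lemma dist_sq_eq {d : ℕ} (i : Fin (d+1)) (x y : EuclideanSpace ℝ (Fin (d+1))) :
    dist x y ^ 2 = (x i - y i)^2 + dist (drop i x) (drop i y) ^ 2 := by
  rw [EuclideanSpace.dist_eq, EuclideanSpace.dist_eq, Real.sq_sqrt (by positivity),
    Real.sq_sqrt (by positivity)]
  simp only [Real.dist_eq, sq_abs, drop]
  exact Fin.sum_univ_succAbove (fun l => (x l - y l)^2) i

lemma norm_sq_eq {d : ℕ} (i : Fin (d+1)) (x : EuclideanSpace ℝ (Fin (d+1))) :
    ‖x‖ ^ 2 = (x i)^2 + ‖drop i x‖ ^ 2 := by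
  rw [EuclideanSpace.norm_eq, EuclideanSpace.norm_eq, Real.sq_sqrt (by positivity),
    Real.sq_sqrt (by positivity)]
  simp only [Real.norm_eq_abs, sq_abs, drop]
  exact Fin.sum_univ_succAbove (fun l => (x l)^2) i

lemma drop_lipschitz {d : ℕ} (i : Fin (d+1)) (x y : EuclideanSpace ℝ (Fin (d+1))) :
    dist (drop i x) (drop i y) ≤ dist x y := by
  have h := dist_sq_eq i x y
  nlinarith [dist_nonneg (x := drop i x) (y := drop i y), dist_nonneg (x := x) (y := y),
    sq_nonneg (x i - y i)]

lemma drop_dist_ge {d : ℕ} (i : Fin (d+1)) (x y : EuclideanSpace ℝ (Fin (d+1)))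
    (hx : ‖x‖ = 1) (hy : ‖y‖ = 1) (a : ℝ) (ha : 0 < a) (ha1 : a ≤ 1)
    (hxi : a ≤ x i) (hyi : a ≤ y i) :
    (a/2) * dist x y ≤ dist (drop i x) (drop i y) := by
  set u := drop i x with hu
  set v := drop i y with hv
  have h1 : (x i)^2 + ‖u‖^2 = 1 := by have := norm_sq_eq i x; rw [hx] at this; nlinarith
  have h2 : (y i)^2 + ‖v‖^2 = 1 := by have := norm_sq_eq i y; rw [hy] at this; nlinarith
  have hun : ‖u‖ ≤ 1 := by nlinarith [norm_nonneg u, sq_nonneg (x i)]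
  have hvn : ‖v‖ ≤ 1 := by nlinarith [norm_nonneg v, sq_nonneg (y i)]
  have hinner : ⟪v - u, v + u⟫ = ‖v‖^2 - ‖u‖^2 := by
    simp only [inner_sub_left, inner_add_right, real_inner_self_eq_norm_sq,
      real_inner_comm u v]
    ring
  have habs : |‖v‖^2 - ‖u‖^2| ≤ 2 * dist u v := by
    rw [← hinner]
    calc |⟪v - u, v + u⟫| ≤ ‖v - u‖ * ‖v + u‖ := abs_real_inner_le_norm _ _
      _ ≤ dist u v * 2 := by
          rw [dist_eq_norm, ← norm_sub_rev]
          exact mul_le_mul_of_nonneg_left ((norm_add_le v u).trans (by linarith)) (norm_nonneg _)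
      _ = 2 * dist u v := by ring
  -- (x i - y i)^2 ≤ (dist u v)^2 / a^2
  have hpq : (x i - y i) * (x i + y i) = ‖v‖^2 - ‖u‖^2 := by nlinarith
  have hsum : 2*a ≤ x i + y i := by linarith
  have hposs : 0 < x i + y i := by linarith
  have e1 : |x i - y i| * (x i + y i) ≤ 2 * dist u v := by
    calc |x i - y i| * (x i + y i) = |(x i - y i) * (x i + y i)| := by
          rw [abs_mul, abs_of_pos hposs]
      _ = |‖v‖^2 - ‖u‖^2| := by rw [hpq]
      _ ≤ 2 * dist u v := habs
  have e2 : a * |x i - y i| ≤ dist u v := by nlinarith [abs_nonneg (x i - y i)]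
  have hkey : a^2 * (x i - y i)^2 ≤ (dist u v)^2 := by
    have := mul_self_le_mul_self (by positivity : (0:ℝ) ≤ a * |x i - y i|) e2
    nlinarith [sq_abs (x i - y i)]
  have hd := dist_sq_eq i x y
  have ha2 : a^2 ≤ 1 := by nlinarith
  have haa : 0 ≤ (1 - a^2) * (dist u v)^2 := mul_nonneg (by linarith) (sq_nonneg _)
  have hgoal2 : (a/2 * dist x y)^2 ≤ (dist u v)^2 := by nlinarith [sq_nonneg (dist u v)]
  have h0 : 0 ≤ a/2 * dist x y := by positivity
  have := Real.sqrt_le_sqrt hgoal2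
  rwa [Real.sqrt_sq h0, Real.sqrt_sq dist_nonneg] at this

lemma geom_filter_sum (T : ℝ) (hT : 1 ≤ T) (M e : ℕ) (he : 1 ≤ e) :
    ∑ j ∈ (Finset.range M).filter (fun j => (2:ℝ)^j ≤ T), ((2:ℝ)^e)^j ≤ 2 * T^e := by
  have hT0 : (0:ℝ) < T := by linarith
  have hfl : 1 ≤ Nat.floor T := Nat.le_floor (by exact_mod_cast hT)
  set J := Nat.log 2 (Nat.floor T) with hJ
  have hsub : (Finset.range M).filter (fun j => (2:ℝ)^j ≤ T) ⊆ Finset.range (J+1) := by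
    intro j hj
    have hjT : (2:ℝ)^j ≤ T := (Finset.mem_filter.mp hj).2
    have : (2^j : ℕ) ≤ Nat.floor T := Nat.le_floor (by push_cast; exact_mod_cast hjT)
    have := (Nat.le_log_iff_pow_le (by norm_num) (by omega)).mpr this
    exact Finset.mem_range.mpr (by omega)
  have h1 : ∑ j ∈ (Finset.range M).filter (fun j => (2:ℝ)^j ≤ T), ((2:ℝ)^e)^j
      ≤ ∑ j ∈ Finset.range (J+1), ((2:ℝ)^e)^j :=
    Finset.sum_le_sum_of_subset_of_nonneg hsub (fun j _ _ => by positivity)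
  set x : ℝ := (2:ℝ)^e with hx
  have hx2 : (2:ℝ) ≤ x := by
    calc (2:ℝ) = 2^1 := (pow_one 2).symm
      _ ≤ 2^e := by exact pow_le_pow_right₀ (by norm_num) he
  have hxne : x ≠ 1 := by linarith
  have h2 : ∑ j ∈ Finset.range (J+1), x^j = (x^(J+1) - 1)/(x - 1) := by
    rw [geom_sum_eq hxne]
  have hxJ : (0:ℝ) < x^J := by positivity
  have h3 : (x^(J+1) - 1)/(x - 1) ≤ 2 * x^J := by
    rw [div_le_iff₀ (by linarith)]
    have hps : x^(J+1) = x^J * x := pow_succ x J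
    nlinarith [hxJ]
  have h4 : x^J ≤ T^e := by
    have h2JT : ((2:ℝ))^J ≤ T := by
      have := Nat.pow_log_le_self 2 (show Nat.floor T ≠ 0 by omega)
      have hc : ((2^J : ℕ) : ℝ) ≤ (Nat.floor T : ℝ) := by exact_mod_cast this
      calc ((2:ℝ))^J = ((2^J : ℕ) : ℝ) := by push_cast; ring
        _ ≤ (Nat.floor T : ℝ) := hc
        _ ≤ T := Nat.floor_le hT0.le
    calc x^J = ((2:ℝ)^J)^e := by rw [hx, ← pow_mul, ← pow_mul, Nat.mul_comm]
      _ ≤ T^e := pow_le_pow_left₀ (by positivity) h2JT e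
  calc ∑ j ∈ (Finset.range M).filter (fun j => (2:ℝ)^j ≤ T), ((2:ℝ)^e)^j
      ≤ ∑ j ∈ Finset.range (J+1), x^j := h1
    _ = (x^(J+1) - 1)/(x - 1) := h2
    _ ≤ 2 * x^J := h3
    _ ≤ 2 * T^e := by linarith

lemma exists_coord {d : ℕ} (x : EuclideanSpace ℝ (Fin (d+1))) (hx : ‖x‖ = 1) :
    ∃ i, 1/((d:ℝ)+1) ≤ |x i| := by
  have hsq : ∑ i, (x i)^2 = 1 := by
    have h := EuclideanSpace.norm_eq x
    rw [hx] at h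
    have h2 : Real.sqrt (∑ i, ‖x i‖^2) = 1 := h.symm
    rw [Real.sqrt_eq_one] at h2
    simpa [Real.norm_eq_abs, sq_abs] using h2
  by_contra hcon
  push_neg at hcon
  have hlt : ∀ i : Fin (d+1), (x i)^2 < (1/((d:ℝ)+1))^2 := by
    intro i
    have := hcon i
    nlinarith [abs_nonneg (x i), sq_abs (x i)]
  have hsum : ∑ i : Fin (d+1), (x i)^2 < ∑ _i : Fin (d+1), (1/((d:ℝ)+1))^2 :=
    Finset.sum_lt_sum_of_nonempty Finset.univ_nonempty (fun i _ => hlt i)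
  rw [hsq, Finset.sum_const, Finset.card_univ, Fintype.card_fin, nsmul_eq_mul] at hsum
  push_cast at hsum
  have hd1 : (0:ℝ) < (d:ℝ)+1 := by positivity
  have : ((d:ℝ)+1) * (1/((d:ℝ)+1))^2 = 1/((d:ℝ)+1) := by field_simp
  rw [this] at hsum
  have : 1/((d:ℝ)+1) ≤ 1 := by rw [div_le_one hd1]; linarith
  linarith

lemma class_count {d : ℕ} (hd : 1 ≤ d) (G : Finset (EuclideanSpace ℝ (Fin (d+1))))
    (i : Fin (d+1)) (a δ r : ℝ) (ha : 0 < a) (ha1 : a ≤ 1) (hδ : 0 < δ) (hr : 0 ≤ r)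
    (hG1 : ∀ x ∈ G, ‖x‖ = 1) (hG2 : ∀ x ∈ G, a ≤ x i)
    (hsep : ∀ x ∈ G, ∀ y ∈ G, x ≠ y → δ ≤ dist x y)
    (c : EuclideanSpace ℝ (Fin (d+1))) (hball : ∀ x ∈ G, dist x c ≤ r) :
    (G.card : ℝ) ≤ (2*r/(a/2*δ) + 1)^d := by
  classical
  haveI : Nontrivial (EuclideanSpace ℝ (Fin d)) := by
    apply Module.nontrivial_of_finrank_pos (R := ℝ)
    rw [finrank_euclideanSpace_fin]
    omega
  have hs' : 0 < a/2*δ := by positivity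
  have hinj : Set.InjOn (drop i) ↑G := by
    intro x hx y hy hxy
    by_contra hne
    have h1 := drop_dist_ge i x y (hG1 x hx) (hG1 y hy) a ha ha1 (hG2 x hx) (hG2 y hy)
    have h2 := hsep x hx y hy hne
    have : dist (drop i x) (drop i y) = 0 := by rw [hxy, dist_self]
    nlinarith [dist_nonneg (x := x) (y := y)]
  have hcard : ((G.image (drop i)).card : ℝ) = G.card := by
    rw [Finset.card_image_of_injOn hinj]
  have := packing (volume : Measure (EuclideanSpace ℝ (Fin d))) (G.image (drop i))
    (drop i c) (a/2*δ) r hs' hr ?_ ?_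
  · rw [finrank_euclideanSpace_fin] at this
    rw [← hcard]
    exact this
  · intro u hu v hv huv
    obtain ⟨x, hx, rfl⟩ := Finset.mem_image.mp hu
    obtain ⟨y, hy, rfl⟩ := Finset.mem_image.mp hv
    have hne : x ≠ y := fun h => huv (by rw [h])
    calc a/2*δ ≤ a/2 * dist x y := by
          have := hsep x hx y hy hne
          nlinarith
      _ ≤ dist (drop i x) (drop i y) :=
          drop_dist_ge i x y (hG1 x hx) (hG1 y hy) a ha ha1 (hG2 x hx) (hG2 y hy)
  · intro u hu
    obtain ⟨x, hx, rfl⟩ := Finset.mem_image.mp hu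
    exact (drop_lipschitz i x c).trans (hball x hx)

lemma count_cap {d : ℕ} (hd : 1 ≤ d) (A : Finset (EuclideanSpace ℝ (Fin (d+1))))
    (hA : ∀ x ∈ A, ‖x‖ = 1) (δ : ℝ) (hδ : 0 < δ)
    (hsep : ∀ x ∈ A, ∀ y ∈ A, x ≠ y → δ ≤ dist x y)
    (μ : EuclideanSpace ℝ (Fin (d+1))) (r : ℝ) (hr : 0 ≤ r) :
    ((A.filter (fun ν => dist ν μ ≤ r)).card : ℝ)
      ≤ (2*((d:ℝ)+1)) * (4*((d:ℝ)+1)*r/δ + 1)^d := by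
  classical
  set a : ℝ := 1/((d:ℝ)+1) with ha_def
  have hd1 : (0:ℝ) < (d:ℝ)+1 := by positivity
  have ha : 0 < a := by positivity
  have ha1 : a ≤ 1 := by rw [ha_def, div_le_one hd1]; linarith
  set F := A.filter (fun ν => dist ν μ ≤ r) with hF
  have hFsub : F ⊆ A := Finset.filter_subset _ _
  set cls : Fin (d+1) × Bool → Finset (EuclideanSpace ℝ (Fin (d+1))) :=
    fun p => F.filter (fun ν => if p.2 then a ≤ ν p.1 else a ≤ -(ν p.1)) with hcls
  have hcover : F ⊆ Finset.univ.biUnion cls := by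
    intro ν hν
    obtain ⟨i, hi⟩ := exists_coord ν (hA ν (hFsub hν))
    rcases abs_cases (ν i) with ⟨heq, _⟩ | ⟨heq, _⟩
    · exact Finset.mem_biUnion.mpr ⟨(i, true), Finset.mem_univ _,
        Finset.mem_filter.mpr ⟨hν, by simp only [if_pos rfl]; rw [heq] at hi; exact hi⟩⟩
    · exact Finset.mem_biUnion.mpr ⟨(i, false), Finset.mem_univ _,
        Finset.mem_filter.mpr ⟨hν, by simp only [if_neg Bool.false_ne_true]; rw [heq] at hi; exact hi⟩⟩
  have hbound : ∀ p : Fin (d+1) × Bool, ((cls p).card : ℝ) ≤ (2*r/(a/2*δ) + 1)^d := by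
    rintro ⟨i, s⟩
    cases s
    · -- negative class: use images under negation
      set G := (cls (i, false)).image (fun ν => -ν) with hG
      have hcardG : G.card = (cls (i, false)).card := by
        rw [hG]; exact Finset.card_image_of_injective _ neg_injective
      have hmem : ∀ x ∈ G, ∃ ν ∈ cls (i, false), x = -ν := by
        intro x hx
        rw [hG] at hx
        obtain ⟨ν, hν, rfl⟩ := Finset.mem_image.mp hx
        exact ⟨ν, hν, rfl⟩
      have := class_count hd G i a δ r ha ha1 hδ hr ?_ ?_ ?_ (-μ) ?_
      · rw [← hcardG] at *; exact_mod_cast this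
      · intro x hx
        obtain ⟨ν, hν, rfl⟩ := hmem x hx
        rw [norm_neg]
        exact hA ν (hFsub (Finset.mem_filter.mp hν).1)
      · intro x hx
        obtain ⟨ν, hν, rfl⟩ := hmem x hx
        have := (Finset.mem_filter.mp hν).2
        simp only [if_neg Bool.false_ne_true] at this
        exact this
      · intro x hx y hy hxy
        obtain ⟨ν, hν, rfl⟩ := hmem x hx
        obtain ⟨ν', hν', rfl⟩ := hmem y hy
        rw [dist_neg_neg]
        exact hsep ν (hFsub (Finset.mem_filter.mp hν).1) ν'
          (hFsub (Finset.mem_filter.mp hν').1) (fun h => hxy (by rw [h]))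
      · intro x hx
        obtain ⟨ν, hν, rfl⟩ := hmem x hx
        rw [dist_neg_neg]
        have := Finset.mem_filter.mp ((Finset.mem_filter.mp hν).1)
        exact this.2
    · -- positive class
      apply class_count hd (cls (i, true)) i a δ r ha ha1 hδ hr
      · intro x hx
        exact hA x (hFsub (Finset.mem_filter.mp hx).1)
      · intro x hx
        have := (Finset.mem_filter.mp hx).2
        simp only [if_pos rfl] at this
        exact this
      · intro x hx y hy hxy
        exact hsep x (hFsub (Finset.mem_filter.mp hx).1) y
          (hFsub (Finset.mem_filter.mp hy).1) hxy
      · intro x hx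
        exact (Finset.mem_filter.mp ((Finset.mem_filter.mp hx).1)).2
  have h1 : (F.card : ℝ) ≤ ∑ p : Fin (d+1) × Bool, ((cls p).card : ℝ) := by
    have := (Finset.card_le_card hcover).trans (Finset.card_biUnion_le)
    exact_mod_cast this
  have h2 : ∑ p : Fin (d+1) × Bool, ((cls p).card : ℝ)
      ≤ (2*((d:ℝ)+1)) * (2*r/(a/2*δ) + 1)^d := by
    calc ∑ p : Fin (d+1) × Bool, ((cls p).card : ℝ)
        ≤ ∑ _p : Fin (d+1) × Bool, (2*r/(a/2*δ) + 1)^d :=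
          Finset.sum_le_sum (fun p _ => hbound p)
      _ = (2*((d:ℝ)+1)) * (2*r/(a/2*δ) + 1)^d := by
          rw [Finset.sum_const, Finset.card_univ, nsmul_eq_mul, Fintype.card_prod,
            Fintype.card_fin, Fintype.card_bool]
          push_cast
          ring
  have hδ' : δ ≠ 0 := ne_of_gt hδ
  have hd1' : (d:ℝ)+1 ≠ 0 := ne_of_gt hd1
  have heq : 2*r/(a/2*δ) = 4*((d:ℝ)+1)*r/δ := by
    rw [ha_def, div_eq_div_iff (by positivity : (0:ℝ) < 1/((d:ℝ)+1)/2*δ).ne' hδ']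
    field_simp
    ring
  rw [heq] at h2
  exact h1.trans h2

lemma sum_est {d : ℕ} (hd : 1 ≤ d) (A : Finset (EuclideanSpace ℝ (Fin (d+2))))
    (hA : ∀ x ∈ A, ‖x‖ = 1) (δ m : ℝ) (hδ : 0 < δ) (hm1 : 1 ≤ m) (hmδ : m * δ = 1)
    (k : ℕ) (hmk : m = 2^k)
    (hsep : ∀ x ∈ A, ∀ y ∈ A, x ≠ y → δ ≤ dist x y)
    (N : ℝ) (hN : (A.card : ℝ) ≤ N) (T : ℝ) (hT1 : 1 ≤ T) (hTN : T^(d+1) = N)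
    (μ : EuclideanSpace ℝ (Fin (d+2))) (hμ : μ ∈ A) :
    ∑ ν ∈ A, δ*δ/(m * dist ν μ + 1) ≤
      (2 + 2*(2*((d:ℝ)+2) * (16*((d:ℝ)+2))^(d+1))) * (δ*δ*T^d) := by
  classical
  have hmpos : 0 < m := lt_of_lt_of_le one_pos hm1
  have hTpos : 0 < T := lt_of_lt_of_le one_pos hT1
  set D₀ : ℝ := 2*((d:ℝ)+2) * (16*((d:ℝ)+2))^(d+1) with hD₀
  have hD₀pos : 0 < D₀ := by positivity
  set f : EuclideanSpace ℝ (Fin (d+2)) → ℝ := fun ν => δ*δ/(m * dist ν μ + 1) with hf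
  have hden : ∀ ν : EuclideanSpace ℝ (Fin (d+2)), 0 < m * dist ν μ + 1 := by
    intro ν
    have := dist_nonneg (x := ν) (y := μ)
    nlinarith
  have hfnonneg : ∀ ν, 0 ≤ f ν := fun ν => div_nonneg (by positivity) (hden ν).le
  have hTd1 : (1:ℝ) ≤ T^d := by
    calc (1:ℝ) = 1^d := (one_pow d).symm
      _ ≤ T^d := pow_le_pow_left₀ zero_le_one hT1 d
  -- counting in shells
  have hshell : ∀ j : ℕ, ((A.filter (fun ν => dist ν μ ≤ 2^(j+1)*δ)).card : ℝ)
      ≤ D₀ * ((2:ℝ)^j)^(d+1) := by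
    intro j
    have h := count_cap (d := d+1) (by omega) A hA δ hδ hsep μ ((2:ℝ)^(j+1)*δ) (by positivity)
    have hcast : (((d+1:ℕ)):ℝ) + 1 = (d:ℝ)+2 := by push_cast; ring
    rw [hcast] at h
    refine h.trans ?_
    have hj1 : (1:ℝ) ≤ (2:ℝ)^j := by
      calc (1:ℝ) = 1^j := (one_pow j).symm
        _ ≤ (2:ℝ)^j := pow_le_pow_left₀ zero_le_one one_le_two j
    have harg : 4*((d:ℝ)+2)*((2:ℝ)^(j+1)*δ)/δ + 1 ≤ 16*((d:ℝ)+2)*(2:ℝ)^j := by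
      have h1 : 4*((d:ℝ)+2)*((2:ℝ)^(j+1)*δ)/δ = 8*((d:ℝ)+2)*(2:ℝ)^j := by
        field_simp
        ring
      rw [h1]
      have hd0 : (0:ℝ) ≤ (d:ℝ) := Nat.cast_nonneg d
      have hprod : (1:ℝ) ≤ 8*((d:ℝ)+2)*(2:ℝ)^j := by
        calc (1:ℝ) = 1*1 := by ring
          _ ≤ (8*((d:ℝ)+2))*(2:ℝ)^j :=
            mul_le_mul (by linarith) hj1 zero_le_one (by positivity)
      linarith
    calc (2*((d:ℝ)+2)) * (4*((d:ℝ)+2)*((2:ℝ)^(j+1)*δ)/δ + 1)^(d+1)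
        ≤ (2*((d:ℝ)+2)) * (16*((d:ℝ)+2)*(2:ℝ)^j)^(d+1) :=
          mul_le_mul_of_nonneg_left (pow_le_pow_left₀ (by positivity) harg _)
            (by positivity)
      _ = D₀ * ((2:ℝ)^j)^(d+1) := by rw [hD₀, mul_pow]; ring
  -- split off μ
  have hsum0 : ∑ ν ∈ A, f ν = f μ + ∑ ν ∈ A.erase μ, f ν := (Finset.add_sum_erase A f hμ).symm
  have hfμ : f μ ≤ δ*δ*T^d := by
    have : f μ = δ*δ := by rw [hf]; simp
    rw [this]
    nlinarith [mul_pos hδ hδ]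
  set E := A.erase μ with hE
  set P := E.filter (fun ν => dist ν μ ≤ T*δ) with hP
  set Q := E.filter (fun ν => ¬ dist ν μ ≤ T*δ) with hQ
  have hsplit : ∑ ν ∈ E, f ν = ∑ ν ∈ P, f ν + ∑ ν ∈ Q, f ν :=
    (Finset.sum_filter_add_sum_filter_not E _ f).symm
  -- far part
  have hfar : ∑ ν ∈ Q, f ν ≤ δ*δ*T^d := by
    have hterm : ∀ ν ∈ Q, f ν ≤ δ*δ/T := by
      intro ν hν
      have hgt : T*δ < dist ν μ := not_le.mp (Finset.mem_filter.mp hν).2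
      have hle : T ≤ m * dist ν μ + 1 := by
        have h1 : m * (T*δ) ≤ m * dist ν μ := mul_le_mul_of_nonneg_left hgt.le hmpos.le
        have h2 : m * (T*δ) = T := by rw [show m * (T*δ) = T*(m*δ) by ring, hmδ, mul_one]
        linarith
      rw [hf]
      exact div_le_div_of_nonneg_left (by positivity) hTpos hle
    calc ∑ ν ∈ Q, f ν ≤ Q.card • (δ*δ/T) := Finset.sum_le_card_nsmul Q f _ hterm
      _ = (Q.card : ℝ) * (δ*δ/T) := by rw [nsmul_eq_mul]
      _ ≤ N * (δ*δ/T) := by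
          apply mul_le_mul_of_nonneg_right _ (by positivity)
          calc (Q.card : ℝ) ≤ (A.card : ℝ) := by
                exact_mod_cast Finset.card_le_card ((Finset.filter_subset _ _).trans
                  (Finset.erase_subset _ _))
            _ ≤ N := hN
      _ = δ*δ*T^d := by rw [← hTN, pow_succ]; field_simp
  -- near part
  have hnear : ∑ ν ∈ P, f ν ≤ D₀ * (2 * (δ*δ*T^d)) := by
    set g : ℕ → EuclideanSpace ℝ (Fin (d+2)) → ℝ := fun j ν =>
      if (2:ℝ)^j*δ ≤ dist ν μ ∧ dist ν μ < 2^(j+1)*δ then δ*δ/2^j else 0 with hg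
    have hgnonneg : ∀ j ν, 0 ≤ g j ν := by
      intro j ν
      simp only [hg]
      split_ifs
      · positivity
      · exact le_rfl
    have hstep : ∀ ν ∈ P, f ν ≤ ∑ j ∈ Finset.range (k+2), g j ν := by
      intro ν hν
      obtain ⟨hνE, hνnear⟩ := Finset.mem_filter.mp hν
      have hνA : ν ∈ A := Finset.mem_of_mem_erase hνE
      have hνμ : ν ≠ μ := Finset.ne_of_mem_erase hνE
      have hdistδ : δ ≤ dist ν μ := hsep ν hνA μ hμ hνμ
      set u : ℝ := m * dist ν μ with hu
      have hu1 : 1 ≤ u := by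
        calc (1:ℝ) = m * δ := hmδ.symm
          _ ≤ u := mul_le_mul_of_nonneg_left hdistδ hmpos.le
      have hdist2 : dist ν μ ≤ 2 := by
        calc dist ν μ ≤ ‖ν‖ + ‖μ‖ := dist_le_norm_add_norm ν μ
          _ = 2 := by rw [hA ν hνA, hA μ hμ]; norm_num
      have hu2 : u ≤ (2:ℝ)^(k+1) := by
        calc u ≤ m * 2 := mul_le_mul_of_nonneg_left hdist2 hmpos.le
          _ = (2:ℝ)^(k+1) := by rw [hmk, pow_succ]
      set jj := Nat.log 2 ⌊u⌋₊ with hjj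
      have hfl1 : 1 ≤ ⌊u⌋₊ := Nat.le_floor (by exact_mod_cast hu1)
      have hl : (2:ℝ)^jj ≤ u := by
        calc ((2:ℝ))^jj = ((2^jj : ℕ):ℝ) := by push_cast; ring
          _ ≤ (⌊u⌋₊ : ℝ) := by exact_mod_cast Nat.pow_log_le_self 2 (by omega)
          _ ≤ u := Nat.floor_le (by linarith)
      have hr : u < (2:ℝ)^(jj+1) := by
        calc u < (⌊u⌋₊ : ℝ) + 1 := Nat.lt_floor_add_one u
          _ ≤ ((2^(jj+1) : ℕ) : ℝ) := by
              exact_mod_cast Nat.succ_le_of_lt (Nat.lt_pow_succ_log_self (by norm_num) _)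
          _ = (2:ℝ)^(jj+1) := by push_cast; ring
      have hjrange : jj ∈ Finset.range (k+2) := by
        by_contra hcon
        have hjk : k+2 ≤ jj := by
          simpa [Finset.mem_range, not_lt] using hcon
        have hb : (2:ℝ)^(k+2) ≤ (2:ℝ)^jj := pow_le_pow_right₀ one_le_two hjk
        have hc : (2:ℝ)^(k+1) < (2:ℝ)^(k+2) := by
          have hp := pow_pos (show (0:ℝ) < 2 by norm_num) (k+1)
          calc (2:ℝ)^(k+1) < 2^(k+1)*2 := by linarith
            _ = (2:ℝ)^(k+2) := (pow_succ 2 (k+1)).symm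
        linarith
      have hudist : u * δ = dist ν μ := by
        rw [hu, show m * dist ν μ * δ = dist ν μ * (m*δ) by ring, hmδ, mul_one]
      have hcond : (2:ℝ)^jj*δ ≤ dist ν μ ∧ dist ν μ < 2^(jj+1)*δ := by
        constructor
        · rw [← hudist]
          exact mul_le_mul_of_nonneg_right hl hδ.le
        · rw [← hudist]
          exact mul_lt_mul_of_pos_right hr hδ
      have hfval : f ν ≤ δ*δ/2^jj := by
        rw [hf]
        apply div_le_div_of_nonneg_left (by positivity) (by positivity)
        have := dist_nonneg (x := ν) (y := μ)
        calc ((2:ℝ))^jj ≤ u := hl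
          _ ≤ m * dist ν μ + 1 := by rw [hu] at *; linarith
      calc f ν ≤ δ*δ/2^jj := hfval
        _ = g jj ν := by simp only [hg]; rw [if_pos hcond]
        _ ≤ ∑ j ∈ Finset.range (k+2), g j ν :=
            Finset.single_le_sum (fun j _ => hgnonneg j ν) hjrange
    have h1 : ∑ ν ∈ P, f ν ≤ ∑ ν ∈ P, ∑ j ∈ Finset.range (k+2), g j ν :=
      Finset.sum_le_sum hstep
    have h2 : ∑ ν ∈ P, ∑ j ∈ Finset.range (k+2), g j ν
        = ∑ j ∈ Finset.range (k+2), ∑ ν ∈ P, g j ν := Finset.sum_comm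
    have h3 : ∀ j ∈ Finset.range (k+2), ∑ ν ∈ P, g j ν
        ≤ (if (2:ℝ)^j ≤ T then (δ*δ) * D₀ * ((2:ℝ)^d)^j else 0) := by
      intro j _
      have hsumg : ∑ ν ∈ P, g j ν = ((P.filter (fun ν =>
          (2:ℝ)^j*δ ≤ dist ν μ ∧ dist ν μ < 2^(j+1)*δ)).card : ℝ) * (δ*δ/2^j) := by
        simp only [hg]
        rw [← Finset.sum_filter, Finset.sum_const, nsmul_eq_mul]
      rw [hsumg]
      by_cases hjT : (2:ℝ)^j ≤ T
      · rw [if_pos hjT]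
        have hsubs : P.filter (fun ν => (2:ℝ)^j*δ ≤ dist ν μ ∧ dist ν μ < 2^(j+1)*δ)
            ⊆ A.filter (fun ν => dist ν μ ≤ 2^(j+1)*δ) := by
          intro ν hν
          have h1 := Finset.mem_filter.mp hν
          exact Finset.mem_filter.mpr ⟨Finset.mem_of_mem_erase
            (Finset.mem_of_mem_filter _ h1.1), h1.2.2.le⟩
        have hcb : ((P.filter (fun ν => (2:ℝ)^j*δ ≤ dist ν μ ∧ dist ν μ < 2^(j+1)*δ)).card : ℝ)
            ≤ D₀ * ((2:ℝ)^j)^(d+1) := by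
          refine le_trans ?_ (hshell j)
          exact_mod_cast Finset.card_le_card hsubs
        calc ((P.filter (fun ν => (2:ℝ)^j*δ ≤ dist ν μ ∧ dist ν μ < 2^(j+1)*δ)).card : ℝ)
              * (δ*δ/2^j)
            ≤ D₀ * ((2:ℝ)^j)^(d+1) * (δ*δ/2^j) :=
              mul_le_mul_of_nonneg_right hcb (by positivity)
          _ = (δ*δ) * D₀ * ((2:ℝ)^d)^j := by
              rw [pow_succ, show ((2:ℝ)^j)^d = ((2:ℝ)^d)^j by rw [← pow_mul, ← pow_mul, Nat.mul_comm]]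
              field_simp
      · rw [if_neg hjT]
        have hempty : P.filter (fun ν => (2:ℝ)^j*δ ≤ dist ν μ ∧ dist ν μ < 2^(j+1)*δ) = ∅ := by
          rw [Finset.eq_empty_iff_forall_notMem]
          intro ν hν
          have h1 := Finset.mem_filter.mp hν
          have h2 := (Finset.mem_filter.mp h1.1).2
          have h3 := h1.2.1
          have : (2:ℝ)^j * δ ≤ T * δ := h3.trans h2
          exact hjT (le_of_mul_le_mul_right (by linarith) hδ)
        rw [hempty]
        simp
    have h4 : ∑ j ∈ Finset.range (k+2), (if (2:ℝ)^j ≤ T then (δ*δ) * D₀ * ((2:ℝ)^d)^j else 0)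
        ≤ (δ*δ) * D₀ * (2 * T^d) := by
      rw [← Finset.sum_filter, ← Finset.mul_sum]
      exact mul_le_mul_of_nonneg_left (geom_filter_sum T hT1 (k+2) d hd) (by positivity)
    calc ∑ ν ∈ P, f ν ≤ ∑ j ∈ Finset.range (k+2), ∑ ν ∈ P, g j ν := h1.trans (le_of_eq h2)
      _ ≤ ∑ j ∈ Finset.range (k+2), (if (2:ℝ)^j ≤ T then (δ*δ) * D₀ * ((2:ℝ)^d)^j else 0) :=
          Finset.sum_le_sum h3
      _ ≤ (δ*δ) * D₀ * (2 * T^d) := h4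
      _ = D₀ * (2 * (δ*δ*T^d)) := by ring
  calc ∑ ν ∈ A, f ν = f μ + (∑ ν ∈ P, f ν + ∑ ν ∈ Q, f ν) := by rw [hsum0, hsplit]
    _ ≤ δ*δ*T^d + (D₀ * (2 * (δ*δ*T^d)) + δ*δ*T^d) := by
        apply add_le_add hfμ (add_le_add hnear hfar)
    _ = (2 + 2*D₀) * (δ*δ*T^d) := by ring

theorem separated_sphere_sum_bound (n : ℕ) (hn : 4 ≤ n) :
    ∃ C : ℝ, 0 < C ∧ ∀ (A : Finset (EuclideanSpace ℝ (Fin (n-1)))) (lam β : ℝ) (k : ℕ),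
      0 < lam → 0 < β →
      (↑A : Set (EuclideanSpace ℝ (Fin (n-1)))) ⊆
        Metric.sphere (0 : EuclideanSpace ℝ (Fin (n-1))) 1 →
      (∀ ν ∈ A, ∀ μ ∈ A, ν ≠ μ → 2^(-(k:ℝ)) ≤ dist ν μ) →
      (A.card : ℝ) ≤ lam * 2^(-(k:ℝ)*β) * 2^((k:ℝ)*((n:ℝ)-2)) →
      ∀ μ ∈ A, ∑ ν ∈ A, 2^(-2*(k:ℝ))/(2^((k:ℝ)) * dist ν μ + 1) ≤
        C * lam^(((n:ℝ)-3)/((n:ℝ)-2)) * 2^(-(k:ℝ)*β*(((n:ℝ)-3)/((n:ℝ)-2))) *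
          2^((k:ℝ)*((n:ℝ)-5)) := by
  obtain ⟨d, rfl⟩ : ∃ d, n = d + 3 := ⟨n - 3, by omega⟩
  have hd1 : 1 ≤ d := by omega
  set C₀ : ℝ := 2 + 2*(2*((d:ℝ)+2) * (16*((d:ℝ)+2))^(d+1)) with hC₀
  refine ⟨C₀, by positivity, ?_⟩
  intro A lam β k hlam hβ hsphere hsep hcard μ hμ
  have hδpos : (0:ℝ) < (2:ℝ)^(-(k:ℝ)) := Real.rpow_pos_of_pos two_pos _
  have hm1 : (1:ℝ) ≤ (2:ℝ)^((k:ℝ)) := Real.one_le_rpow one_le_two (Nat.cast_nonneg k)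
  have hmδ : (2:ℝ)^((k:ℝ)) * (2:ℝ)^(-(k:ℝ)) = 1 := by
    rw [← Real.rpow_add two_pos]
    simp
  have hmk : (2:ℝ)^((k:ℝ)) = (2:ℝ)^(k:ℕ) := Real.rpow_natCast 2 k
  have hnorm : ∀ x ∈ A, ‖x‖ = 1 := by
    intro x hx
    have hmem := hsphere (Finset.mem_coe.mpr hx)
    rwa [Metric.mem_sphere, dist_zero_right] at hmem
  set N : ℝ := lam * 2^(-(k:ℝ)*β) * 2^((k:ℝ)*(((d+3:ℕ):ℝ)-2)) with hN
  have hNpos : 0 < N := by positivity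
  have hcard1 : (1:ℝ) ≤ (A.card : ℝ) := by
    exact_mod_cast Finset.card_pos.mpr ⟨μ, hμ⟩
  have hN1 : (1:ℝ) ≤ N := le_trans hcard1 hcard
  set T : ℝ := N^((1:ℝ)/((d:ℝ)+1)) with hT
  have hdd1 : ((d:ℝ)+1) ≠ 0 := by positivity
  have hT1 : 1 ≤ T := Real.one_le_rpow hN1 (by positivity)
  have hTN : T^(d+1) = N := by
    rw [hT, ← Real.rpow_natCast (N^((1:ℝ)/((d:ℝ)+1))) (d+1), ← Real.rpow_mul hNpos.le]
    rw [show (1:ℝ)/((d:ℝ)+1)*(((d+1:ℕ)):ℝ) = 1 by push_cast; field_simp]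
    exact Real.rpow_one N
  have key := sum_est hd1 A hnorm ((2:ℝ)^(-(k:ℝ))) ((2:ℝ)^((k:ℝ))) hδpos hm1 hmδ k hmk
    hsep N hcard T hT1 hTN μ hμ
  rw [← hC₀] at key
  have hsum_eq : ∑ ν ∈ A, (2:ℝ)^(-2*(k:ℝ))/((2:ℝ)^((k:ℝ)) * dist ν μ + 1)
      = ∑ ν ∈ A, (2:ℝ)^(-(k:ℝ))*(2:ℝ)^(-(k:ℝ))/((2:ℝ)^((k:ℝ)) * dist ν μ + 1) := by
    refine Finset.sum_congr rfl (fun ν _ => ?_)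
    rw [show (-2*(k:ℝ)) = -(k:ℝ) + -(k:ℝ) by ring, Real.rpow_add two_pos]
  rw [hsum_eq]
  refine key.trans (le_of_eq ?_)
  -- now the algebraic identity
  have hd3 : ((d+3:ℕ):ℝ) = (d:ℝ)+3 := by push_cast; ring
  have hθ : (((d+3:ℕ):ℝ)-3)/(((d+3:ℕ):ℝ)-2) = (d:ℝ)/((d:ℝ)+1) := by
    rw [hd3]
    congr 1 <;> ring
  have hTd : T^(d:ℕ) = N^((d:ℝ)/((d:ℝ)+1)) := by
    rw [hT, ← Real.rpow_natCast (N^((1:ℝ)/((d:ℝ)+1))) d, ← Real.rpow_mul hNpos.le]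
    congr 1
    field_simp
  have hNθ : N^((d:ℝ)/((d:ℝ)+1)) = lam^((d:ℝ)/((d:ℝ)+1))
      * 2^((-(k:ℝ)*β)*((d:ℝ)/((d:ℝ)+1)))
      * 2^(((k:ℝ)*(((d+3:ℕ):ℝ)-2))*((d:ℝ)/((d:ℝ)+1))) := by
    rw [hN, Real.mul_rpow (by positivity) (by positivity),
      Real.mul_rpow hlam.le (by positivity),
      ← Real.rpow_mul (by norm_num : (0:ℝ) ≤ 2),
      ← Real.rpow_mul (by norm_num : (0:ℝ) ≤ 2)]
  have hexp2 : ((k:ℝ)*(((d+3:ℕ):ℝ)-2))*((d:ℝ)/((d:ℝ)+1)) = (k:ℝ)*(d:ℝ) := by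
    rw [hd3]
    field_simp
    ring
  have hstep4 : (2:ℝ)^(-(k:ℝ))*(2:ℝ)^(-(k:ℝ))*(2:ℝ)^((k:ℝ)*(d:ℝ))
      = (2:ℝ)^((k:ℝ)*(((d+3:ℕ):ℝ)-5)) := by
    rw [← Real.rpow_add two_pos, ← Real.rpow_add two_pos]
    congr 1
    rw [hd3]
    ring
  have hmain : (2:ℝ)^(-(k:ℝ))*(2:ℝ)^(-(k:ℝ))*T^d
      = lam^((((d+3:ℕ):ℝ)-3)/(((d+3:ℕ):ℝ)-2))
        * 2^(-(k:ℝ)*β*((((d+3:ℕ):ℝ)-3)/(((d+3:ℕ):ℝ)-2)))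
        * 2^((k:ℝ)*(((d+3:ℕ):ℝ)-5)) := by
    rw [hθ, hTd, hNθ, hexp2, ← hstep4]
    ring
  linear_combination C₀ * hmain
end

section
/- Let C ⊂ ℝⁿ be a subset of an (n−2)-dimensional unit sphere with 𝓗^{n-2}(C) ≥ m > 0, and let δ ∈ (0,1). Then the δ-neighborhood D = {x ∈ ℝⁿ : dist(x, C) ≤ δ} has Lebesgue measure |D| ≥ c_n·m·δ² for a constant c_n > 0 depending only on n. -/
open MeasureTheory Metric Set Module
open scoped ENNReal NNReal RealInnerProductSpace

open MeasureTheory Metric Set Module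
open scoped ENNReal NNReal

lemma aux_normalize_lip {F : Type*} [NormedAddCommGroup F] [NormedSpace ℝ F] (a b : F)
    (ha : 1 ≤ ‖a‖) (hb : 1 ≤ ‖b‖) : ‖‖a‖⁻¹ • a - ‖b‖⁻¹ • b‖ ≤ 2 * ‖a - b‖ := by
  have ha0 : (0:ℝ) < ‖a‖ := lt_of_lt_of_le one_pos ha
  have hb0 : (0:ℝ) < ‖b‖ := lt_of_lt_of_le one_pos hb
  have key : ‖a‖⁻¹ • a - ‖b‖⁻¹ • b = ‖a‖⁻¹ • (a - b) + (‖a‖⁻¹ - ‖b‖⁻¹) • b := by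
    rw [smul_sub, sub_smul]; abel
  rw [key]
  have h1 : ‖‖a‖⁻¹ • (a - b)‖ ≤ ‖a - b‖ := by
    rw [norm_smul, Real.norm_eq_abs, abs_of_pos (by positivity)]
    calc ‖a‖⁻¹ * ‖a-b‖ ≤ 1 * ‖a-b‖ := by
          apply mul_le_mul_of_nonneg_right _ (norm_nonneg _)
          rw [inv_le_one_iff₀]; right; exact ha
      _ = ‖a-b‖ := one_mul _
  have h3 : |‖a‖⁻¹ - ‖b‖⁻¹| = |‖b‖ - ‖a‖| / (‖a‖ * ‖b‖) := by
    rw [inv_sub_inv ha0.ne' hb0.ne', abs_div, abs_of_pos (mul_pos ha0 hb0)]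
  have h2 : ‖(‖a‖⁻¹ - ‖b‖⁻¹) • b‖ ≤ ‖a - b‖ := by
    rw [norm_smul, Real.norm_eq_abs, h3]
    have heq : |‖b‖-‖a‖| / (‖a‖*‖b‖) * ‖b‖ = |‖b‖-‖a‖|/‖a‖ := by field_simp
    rw [heq]
    calc |‖b‖-‖a‖|/‖a‖ ≤ |‖b‖-‖a‖| := div_le_self (abs_nonneg _) ha
      _ = |‖a‖-‖b‖| := abs_sub_comm _ _
      _ ≤ ‖a - b‖ := abs_norm_sub_norm_le a b
  calc ‖_ + _‖ ≤ ‖‖a‖⁻¹ • (a - b)‖ + ‖(‖a‖⁻¹ - ‖b‖⁻¹) • b‖ := norm_add_le _ _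
    _ ≤ ‖a-b‖ + ‖a-b‖ := add_le_add h1 h2
    _ = 2 * ‖a-b‖ := by ring

lemma aux_K0_ne_top (k : ℕ) :
    μH[(k:ℝ)] (Metric.closedBall (0 : EuclideanSpace ℝ (Fin k)) 1) ≠ ⊤ := by
  set f : (Fin k → ℝ) → EuclideanSpace ℝ (Fin k) := fun x => (WithLp.equiv 2 (Fin k → ℝ)).symm x with hf_def
  have hf : LipschitzWith (NNReal.sqrt k) f := by
    apply LipschitzWith.of_dist_le_mul
    intro x y
    rw [EuclideanSpace.dist_eq]
    have h1 : ∀ i, (dist (f x i) (f y i))^2 ≤ (dist x y)^2 := by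
      intro i
      have h2 : dist (f x i) (f y i) ≤ dist x y := dist_le_pi_dist x y i
      exact pow_le_pow_left₀ dist_nonneg h2 2
    calc Real.sqrt (∑ i, (dist (f x i) (f y i))^2) ≤ Real.sqrt (∑ _i : Fin k, (dist x y)^2) := by
          apply Real.sqrt_le_sqrt
          exact Finset.sum_le_sum fun i _ => h1 i
      _ = Real.sqrt k * dist x y := by
          rw [Finset.sum_const, Finset.card_univ, Fintype.card_fin, nsmul_eq_mul,
            Real.sqrt_mul (Nat.cast_nonneg k), Real.sqrt_sq dist_nonneg]
      _ = (NNReal.sqrt k : ℝ) * dist x y := by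
          rw [Real.coe_sqrt]; norm_num
  have hsub : Metric.closedBall (0 : EuclideanSpace ℝ (Fin k)) 1 ⊆
      f '' (Metric.closedBall (0 : Fin k → ℝ) 1) := by
    intro x hx
    refine ⟨WithLp.equiv 2 (Fin k → ℝ) x, ?_, rfl⟩
    rw [mem_closedBall_zero_iff] at hx ⊢
    rw [pi_norm_le_iff_of_nonneg zero_le_one]
    intro i
    have : ‖x i‖ ≤ ‖x‖ := by
      rw [EuclideanSpace.norm_eq, ← Real.sqrt_sq (norm_nonneg (x i))]
      apply Real.sqrt_le_sqrt
      exact Finset.single_le_sum (f := fun i => ‖x i‖^2) (fun i _ => sq_nonneg _)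
        (Finset.mem_univ i)
    exact le_trans this hx
  have hlt : μH[(k:ℝ)] (Metric.closedBall (0 : EuclideanSpace ℝ (Fin k)) 1) < ⊤ :=
    calc μH[(k:ℝ)] (Metric.closedBall (0 : EuclideanSpace ℝ (Fin k)) 1)
      ≤ μH[(k:ℝ)] (f '' (Metric.closedBall (0 : Fin k → ℝ) 1)) := measure_mono hsub
    _ ≤ (NNReal.sqrt k : ℝ≥0∞) ^ (k:ℝ) * μH[(k:ℝ)] (Metric.closedBall (0 : Fin k → ℝ) 1) :=
        hf.hausdorffMeasure_image_le (Nat.cast_nonneg k) _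
    _ < ⊤ := by
        have hvol : μH[(k:ℝ)] (Metric.closedBall (0 : Fin k → ℝ) 1) =
            volume (Metric.closedBall (0 : Fin k → ℝ) 1) := by
          have := hausdorffMeasure_pi_real (ι := Fin k)
          rw [Fintype.card_fin] at this
          rw [this]
        rw [hvol]
        apply ENNReal.mul_lt_top
        · exact ENNReal.rpow_lt_top_of_nonneg (Nat.cast_nonneg k) ENNReal.coe_ne_top
        · exact (isCompact_closedBall _ _).measure_lt_top
  exact hlt.ne

set_option maxHeartbeats 1000000 in
lemma aux_cap_bound {G : Type*} [NormedAddCommGroup G] [InnerProductSpace ℝ G]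
    [FiniteDimensional ℝ G] [MeasurableSpace G] [BorelSpace G]
    (W : Submodule ℝ G) {k : ℕ} (hW : finrank ℝ W = k + 1)
    {u : G} (huW : u ∈ W) (hu : ‖u‖ = 1) {r : ℝ} (hr0 : 0 < r) (hr : r ≤ 1/2) :
    μH[(k:ℝ)] {x : G | x ∈ W ∧ ‖x‖ = 1 ∧ ‖x - u‖ ≤ r} ≤
      ENNReal.ofReal ((4*r)^k) *
        μH[(k:ℝ)] (Metric.closedBall (0 : EuclideanSpace ℝ (Fin k)) 1) := by
  have hdk : (0:ℝ) ≤ (k:ℝ) := Nat.cast_nonneg k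
  have hu0 : u ≠ 0 := by intro h; rw [h, norm_zero] at hu; norm_num at hu
  -- the tangent subspace
  set u' : W := ⟨u, huW⟩ with hu'_def
  have hu'0 : u' ≠ 0 := fun h => hu0 (congrArg Subtype.val h)
  haveI : Fact (finrank ℝ W = k + 1) := ⟨hW⟩
  set V₀ : Submodule ℝ W := (ℝ ∙ u')ᗮ with hV₀_def
  have hV₀ : finrank ℝ V₀ = k := Submodule.finrank_orthogonal_span_singleton hu'0
  set V : Submodule ℝ G := V₀.map W.subtype with hV_def
  have hVk : finrank ℝ V = k := by
    rw [hV_def, Submodule.finrank_map_subtype_eq]; exact hV₀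
  have hVmem : ∀ x : G, x ∈ V ↔ x ∈ W ∧ ⟪u, x⟫ = 0 := by
    intro x
    constructor
    · rintro ⟨v, hv, rfl⟩
      refine ⟨(v : W).2, ?_⟩
      have := Submodule.mem_orthogonal_singleton_iff_inner_right.mp hv
      rwa [Submodule.coe_inner] at this
    · rintro ⟨hxW, hinner⟩
      refine Submodule.mem_map.mpr ⟨⟨x, hxW⟩, ?_, rfl⟩
      rw [hV₀_def, Submodule.mem_orthogonal_singleton_iff_inner_right, Submodule.coe_inner]
      exact hinner
  -- isometry from model space onto V
  set e₁ := (stdOrthonormalBasis ℝ V).repr with he₁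
  set e₂ := LinearIsometryEquiv.piLpCongrLeft 2 ℝ ℝ (finCongr hVk) with he₂
  set ψ : EuclideanSpace ℝ (Fin k) → G := fun y => ((e₁.symm (e₂.symm y)) : G) with hψ_def
  have hψ : Isometry ψ := by
    have h1 : Isometry (V.subtypeₗᵢ) := V.subtypeₗᵢ.isometry
    exact h1.comp (e₁.symm.isometry.comp e₂.symm.isometry)
  have hψ_norm : ∀ y, ‖ψ y‖ = ‖y‖ := by
    intro y
    simp only [hψ_def]
    rw [Submodule.norm_coe, e₁.symm.norm_map, e₂.symm.norm_map]
  have hψ_memV : ∀ y, ψ y ∈ V := fun y => (e₁.symm (e₂.symm y)).2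
  set A : Set G := ψ '' (Metric.closedBall 0 (2*r)) with hA_def
  have hAV : ∀ x ∈ A, x ∈ V ∧ ‖x‖ ≤ 2*r := by
    rintro x ⟨y, hy, rfl⟩
    exact ⟨hψ_memV y, by rw [hψ_norm]; exact mem_closedBall_zero_iff.mp hy⟩
  have hVA : ∀ x : G, x ∈ V → ‖x‖ ≤ 2*r → x ∈ A := by
    intro x hxV hxn
    refine ⟨e₂ (e₁ ⟨x, hxV⟩), ?_, ?_⟩
    · rw [mem_closedBall_zero_iff, e₂.norm_map, e₁.norm_map]
      exact hxn
    · simp [hψ_def]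
  -- the projection map
  set φ : G → G := fun x => ‖u + x‖⁻¹ • (u + x) with hφ_def
  have hone : ∀ x ∈ A, 1 ≤ ‖u + x‖ := by
    intro x hx
    obtain ⟨hxV, -⟩ := hAV x hx
    have hinner : ⟪u, x⟫ = 0 := ((hVmem x).mp hxV).2
    have h1 : ‖u + x‖^2 = 1 + ‖x‖^2 := by
      rw [norm_add_sq_real, hu, hinner]; ring
    nlinarith [norm_nonneg (u + x), norm_nonneg x]
  -- the cap is covered by φ '' A
  have hsurj : {x : G | x ∈ W ∧ ‖x‖ = 1 ∧ ‖x - u‖ ≤ r} ⊆ φ '' A := by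
    rintro x ⟨hxW, hx1, hxr⟩
    set a : ℝ := ⟪u, x⟫ with ha_def
    have hxu2 : ‖x - u‖^2 = 2 - 2*a := by
      rw [norm_sub_sq_real, hu, hx1, real_inner_comm]; ring
    have hxr2 : ‖x - u‖^2 ≤ r^2 := by
      apply pow_le_pow_left₀ (norm_nonneg _) hxr
    have hr2 : r^2 ≤ 1/4 := by nlinarith
    have ha78 : 7/8 ≤ a := by nlinarith
    have ha0 : 0 < a := by linarith
    set v : G := a⁻¹ • x - u with hv_def
    have hvV : v ∈ V := by
      rw [hVmem]
      constructor
      · exact Submodule.sub_mem W (Submodule.smul_mem W _ hxW) huW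
      · rw [hv_def, inner_sub_right, real_inner_smul_right, real_inner_self_eq_norm_sq, hu]
        field_simp
        linarith [ha_def]
    have hveq : v = a⁻¹ • (x - a • u) := by
      rw [hv_def, smul_sub, smul_smul, inv_mul_cancel₀ ha0.ne', one_smul]
    have hxau : ‖x - a • u‖^2 = 1 - a^2 := by
      rw [norm_sub_sq_real, real_inner_smul_right, norm_smul, Real.norm_eq_abs,
        abs_of_pos ha0, hu, hx1, real_inner_comm]
      ring
    have ha1 : a ≤ 1 := by
      have := real_inner_le_norm u x
      rwa [hu, hx1, one_mul] at this
    have hxau_le : ‖x - a • u‖ ≤ r := by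
      nlinarith [norm_nonneg (x - a • u)]
    have hvnorm : ‖v‖ ≤ 2*r := by
      rw [hveq, norm_smul, Real.norm_eq_abs, abs_of_pos (by positivity)]
      have hainv : a⁻¹ ≤ 2 := by
        rw [inv_le_comm₀ ha0 (by norm_num)]
        linarith
      nlinarith [norm_nonneg (x - a • u)]
    have hvA : v ∈ A := hVA v hvV hvnorm
    refine ⟨v, hvA, ?_⟩
    have huv : u + v = a⁻¹ • x := by rw [hv_def]; abel
    have hnuv : ‖u + v‖ = a⁻¹ := by
      rw [huv, norm_smul, Real.norm_eq_abs, abs_of_pos (by positivity), hx1, mul_one]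
    show ‖u + v‖⁻¹ • (u + v) = x
    rw [hnuv, huv, smul_smul, inv_inv, mul_inv_cancel₀ ha0.ne', one_smul]
  -- φ is 2-Lipschitz on A
  have hlip : LipschitzOnWith 2 φ A := by
    apply LipschitzOnWith.of_dist_le_mul
    intro x hx y hy
    rw [dist_eq_norm, dist_eq_norm, hφ_def]
    have := aux_normalize_lip (u + x) (u + y) (hone x hx) (hone y hy)
    simpa [add_sub_add_left_eq_sub] using this
  -- smul scaling
  have hsmul : Metric.closedBall (0 : EuclideanSpace ℝ (Fin k)) (2*r) ⊆
      (fun y => (2*r) • y) '' Metric.closedBall 0 1 := by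
    intro y hy
    refine ⟨(2*r)⁻¹ • y, ?_, ?_⟩
    · rw [mem_closedBall_zero_iff, norm_smul, Real.norm_eq_abs, abs_of_pos (by positivity)]
      rw [mem_closedBall_zero_iff] at hy
      rw [inv_mul_le_iff₀ (by positivity)]
      linarith
    · dsimp only
      rw [smul_smul, mul_inv_cancel₀ (by positivity), one_smul]
  -- combine
  calc μH[(k:ℝ)] {x : G | x ∈ W ∧ ‖x‖ = 1 ∧ ‖x - u‖ ≤ r}
      ≤ μH[(k:ℝ)] (φ '' A) := measure_mono hsurj
    _ ≤ ((2:ℝ≥0):ℝ≥0∞) ^ (k:ℝ) * μH[(k:ℝ)] A := hlip.hausdorffMeasure_image_le hdk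
    _ = ((2:ℝ≥0):ℝ≥0∞) ^ (k:ℝ) * μH[(k:ℝ)] (Metric.closedBall (0 : EuclideanSpace ℝ (Fin k)) (2*r)) := by
        rw [hA_def, hψ.hausdorffMeasure_image (Or.inl hdk)]
    _ ≤ ((2:ℝ≥0):ℝ≥0∞) ^ (k:ℝ) *
        (((‖(2*r : ℝ)‖₊ : ℝ≥0∞)) ^ (k:ℝ) *
          μH[(k:ℝ)] (Metric.closedBall (0 : EuclideanSpace ℝ (Fin k)) 1)) := by
        apply mul_le_mul_right
        calc μH[(k:ℝ)] (Metric.closedBall (0 : EuclideanSpace ℝ (Fin k)) (2*r))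
            ≤ μH[(k:ℝ)] ((fun y => (2*r) • y) '' Metric.closedBall 0 1) := measure_mono hsmul
          _ ≤ _ := (lipschitzWith_smul (2*r : ℝ)).hausdorffMeasure_image_le hdk _
    _ = ENNReal.ofReal ((4*r)^k) *
          μH[(k:ℝ)] (Metric.closedBall (0 : EuclideanSpace ℝ (Fin k)) 1) := by
        rw [← mul_assoc]
        congr 1
        rw [ENNReal.rpow_natCast, ENNReal.rpow_natCast,
          ← enorm_eq_nnnorm, Real.enorm_eq_ofReal (by positivity : (0:ℝ) ≤ 2*r),
          show ((2:ℝ≥0):ℝ≥0∞) = ENNReal.ofReal 2 by norm_num,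
          ← ENNReal.ofReal_pow (by norm_num : (0:ℝ) ≤ 2),
          ← ENNReal.ofReal_pow (by positivity : (0:ℝ) ≤ 2*r),
          ← ENNReal.ofReal_mul (by positivity)]
        congr 1
        rw [← mul_pow]
        ring_nf


set_option maxHeartbeats 1000000 in
theorem sausage_of_sphere_subset (n : ℕ) (hn : 3 ≤ n) :
    ∃ c : ℝ, 0 < c ∧ ∀ (C : Set (EuclideanSpace ℝ (Fin n))) (m δ : ℝ),
      0 < m → 0 < δ → δ < 1 →
      (∃ (z : EuclideanSpace ℝ (Fin n)) (W : Submodule ℝ (EuclideanSpace ℝ (Fin n))),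
        Module.finrank ℝ W = n - 1 ∧ C ⊆ {x | x - z ∈ W ∧ dist x z = 1}) →
      ENNReal.ofReal m ≤ μH[(n:ℝ)-2] C →
      ENNReal.ofReal (c * m * δ^2) ≤ volume (Metric.cthickening δ C) := by
  set E := EuclideanSpace ℝ (Fin n) with hE
  set k := n - 2 with hk_def
  have hk2 : k + 2 = n := by omega
  have hdcast : (n:ℝ) - 2 = (k:ℝ) := by
    rw [hk_def, Nat.cast_sub (by omega)]; norm_num
  set K₀ := μH[(k:ℝ)] (Metric.closedBall (0 : EuclideanSpace ℝ (Fin k)) 1) with hK₀_def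
  have hK₀top : K₀ ≠ ⊤ := aux_K0_ne_top k
  set Kr := max K₀.toReal 1 with hKr_def
  have hKr0 : 0 < Kr := lt_of_lt_of_le one_pos (le_max_right _ _)
  set B := volume (Metric.ball (0 : E) 1) with hB_def
  have hB0 : 0 < B := measure_ball_pos _ _ one_pos
  have hBtop : B ≠ ⊤ := ((measure_mono Metric.ball_subset_closedBall).trans_lt
    (isCompact_closedBall _ _).measure_lt_top).ne
  set Br := B.toReal with hBr_def
  have hBr0 : 0 < Br := ENNReal.toReal_pos hB0.ne' hBtop
  refine ⟨Br / (8^n * 2^k * Kr), by positivity, ?_⟩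
  intro C m δ hm hδ0 hδ1 hS hmC
  obtain ⟨z, W, hW, hCS⟩ := hS
  have hWk : Module.finrank ℝ W = k + 1 := by rw [hW]; omega
  -- C is totally bounded
  have hCb : TotallyBounded C :=
    TotallyBounded.subset (fun x hx => Metric.mem_closedBall.mpr (le_of_eq (hCS hx).2))
      ((isCompact_closedBall z 1).totallyBounded)
  obtain ⟨T, hTC, hTfin, hTcover⟩ := Metric.finite_approx_of_totallyBounded hCb (δ/8)
    (by positivity)
  -- a maximal (δ/4)-separated subset of T
  classical
  set T' := hTfin.toFinset with hT'_def
  set P := T'.powerset.filter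
    (fun s : Finset E => ∀ a ∈ s, ∀ b ∈ s, a ≠ b → δ/4 < dist a b) with hP_def
  have hPne : P.Nonempty := ⟨∅, by simp [hP_def]⟩
  obtain ⟨s, hsP, hsmax⟩ := P.exists_max_image Finset.card hPne
  rw [hP_def, Finset.mem_filter, Finset.mem_powerset] at hsP
  obtain ⟨hsT, hsep⟩ := hsP
  have hsC : ∀ t ∈ s, t ∈ C := by
    intro t ht
    exact hTC (hTfin.mem_toFinset.mp (hsT ht))
  -- every point of T is close to s
  have hnear : ∀ t ∈ T', ∃ t₀ ∈ s, dist t t₀ ≤ δ/4 := by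
    intro t ht
    by_contra hcon
    push_neg at hcon
    have htns : t ∉ s := by
      intro hts
      have := hcon t hts
      simp at this
      linarith
    have hins : insert t s ∈ P := by
      rw [hP_def, Finset.mem_filter, Finset.mem_powerset]
      constructor
      · intro a ha
        rcases Finset.mem_insert.mp ha with rfl | ha
        · exact ht
        · exact hsT ha
      · intro a ha b hb hab
        rcases Finset.mem_insert.mp ha with rfl | ha'
        · rcases Finset.mem_insert.mp hb with rfl | hb'
          · exact absurd rfl hab
          · exact hcon b hb'
        · rcases Finset.mem_insert.mp hb with rfl | hb'
          · rw [dist_comm]; exact hcon a ha'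
          · exact hsep a ha' b hb' hab
    have := hsmax _ hins
    rw [Finset.card_insert_of_notMem htns] at this
    omega
  -- C is covered by closed balls of radius δ/2 around s
  have hcover : ∀ x ∈ C, ∃ t₀ ∈ s, dist x t₀ ≤ δ/2 := by
    intro x hx
    obtain ⟨t, ht, hxt⟩ := Set.mem_iUnion₂.mp (hTcover hx)
    obtain ⟨t₀, ht₀, htt₀⟩ := hnear t (hTfin.mem_toFinset.mpr ht)
    refine ⟨t₀, ht₀, ?_⟩
    have : dist x t < δ/8 := hxt
    calc dist x t₀ ≤ dist x t + dist t t₀ := dist_triangle _ _ _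
      _ ≤ δ/8 + δ/4 := add_le_add this.le htt₀
      _ ≤ δ/2 := by linarith
  -- cap bound for each ball
  have hcap : ∀ t₀ ∈ s,
      μH[(k:ℝ)] ({x : E | x - z ∈ W ∧ dist x z = 1} ∩ Metric.closedBall t₀ (δ/2)) ≤
        ENNReal.ofReal ((2*δ)^k) * K₀ := by
    intro t₀ ht₀
    obtain ⟨ht₀W, ht₀1⟩ := hCS (hsC t₀ ht₀)
    set u : E := t₀ - z with hu_def
    have hu1 : ‖u‖ = 1 := by rw [hu_def, ← dist_eq_norm]; exact ht₀1
    have him : {x : E | x - z ∈ W ∧ dist x z = 1} ∩ Metric.closedBall t₀ (δ/2) =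
        (fun w : E => z + w) '' {x : E | x ∈ W ∧ ‖x‖ = 1 ∧ ‖x - u‖ ≤ δ/2} := by
      ext x
      constructor
      · rintro ⟨⟨hxW, hx1⟩, hxb⟩
        refine ⟨x - z, ⟨hxW, ?_, ?_⟩, by show z + (x - z) = x; rw [add_comm, sub_add_cancel]⟩
        · rw [← dist_eq_norm]; exact hx1
        · rw [hu_def, show x - z - (t₀ - z) = x - t₀ by abel, ← dist_eq_norm]
          exact Metric.mem_closedBall.mp hxb
      · rintro ⟨w, ⟨hwW, hw1, hwu⟩, rfl⟩
        refine ⟨⟨by simpa using hwW, ?_⟩, ?_⟩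
        · rw [dist_eq_norm]; simpa using hw1
        · rw [Metric.mem_closedBall, dist_eq_norm]
          rw [hu_def] at hwu
          have : z + w - t₀ = w - (t₀ - z) := by abel
          rw [this]
          exact hwu
    rw [him]
    have htrans : Isometry (fun w : E => z + w) := Isometry.of_dist_eq fun a b => by
      simp [dist_add_left]
    rw [htrans.hausdorffMeasure_image (Or.inl (Nat.cast_nonneg k))]
    have := aux_cap_bound W hWk ht₀W hu1 (by positivity : (0:ℝ) < δ/2)
      (by linarith : δ/2 ≤ 1/2)
    convert this using 3
    ring
  -- the counting inequality
  have hcount : ENNReal.ofReal m ≤ s.card * (ENNReal.ofReal ((2*δ)^k) * K₀) := by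
    rw [hdcast] at hmC
    calc ENNReal.ofReal m ≤ μH[(k:ℝ)] C := hmC
      _ ≤ μH[(k:ℝ)] (⋃ t₀ ∈ s, {x : E | x - z ∈ W ∧ dist x z = 1} ∩
            Metric.closedBall t₀ (δ/2)) := by
          apply measure_mono
          intro x hx
          obtain ⟨t₀, ht₀, hxt₀⟩ := hcover x hx
          exact Set.mem_biUnion ht₀ ⟨hCS hx, Metric.mem_closedBall.mpr hxt₀⟩
      _ ≤ ∑ t₀ ∈ s, μH[(k:ℝ)] ({x : E | x - z ∈ W ∧ dist x z = 1} ∩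
            Metric.closedBall t₀ (δ/2)) := measure_biUnion_finset_le _ _
      _ ≤ ∑ _t₀ ∈ s, ENNReal.ofReal ((2*δ)^k) * K₀ := Finset.sum_le_sum hcap
      _ = s.card * (ENNReal.ofReal ((2*δ)^k) * K₀) := by
          rw [Finset.sum_const, nsmul_eq_mul]
  -- convert to a real inequality
  have hNreal : m ≤ s.card * ((2*δ)^k * Kr) := by
    have hfin : (s.card : ℝ≥0∞) * (ENNReal.ofReal ((2*δ)^k) * K₀) ≠ ⊤ :=
      ENNReal.mul_ne_top (ENNReal.natCast_ne_top _)
        (ENNReal.mul_ne_top ENNReal.ofReal_ne_top hK₀top)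
    have := ENNReal.toReal_mono hfin hcount
    rw [ENNReal.toReal_ofReal hm.le, ENNReal.toReal_mul, ENNReal.toReal_mul,
      ENNReal.toReal_natCast, ENNReal.toReal_ofReal (by positivity)] at this
    calc m ≤ s.card * ((2*δ)^k * K₀.toReal) := this
      _ ≤ s.card * ((2*δ)^k * Kr) := by
          apply mul_le_mul_of_nonneg_left _ (Nat.cast_nonneg _)
          apply mul_le_mul_of_nonneg_left (le_max_left _ _) (by positivity)
  -- the disjoint balls give a volume lower bound
  have hdisj : (↑s : Set E).PairwiseDisjoint (fun t₀ => Metric.closedBall t₀ (δ/8)) := by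
    intro a ha b hb hab
    apply Metric.closedBall_disjoint_closedBall
    have := hsep a (by exact_mod_cast ha) b (by exact_mod_cast hb) hab
    linarith
  have hrn : Module.finrank ℝ E = n := finrank_euclideanSpace_fin
  have hball : ∀ t₀ : E, volume (Metric.closedBall t₀ (δ/8)) =
      ENNReal.ofReal ((δ/8)^n) * B := by
    intro t₀
    rw [hB_def, Measure.addHaar_closedBall _ _ (by positivity : (0:ℝ) ≤ δ/8), hrn]
  have hvol : (s.card : ℝ≥0∞) * (ENNReal.ofReal ((δ/8)^n) * B) ≤
      volume (Metric.cthickening δ C) := by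
    have hsubset : (⋃ t₀ ∈ s, Metric.closedBall t₀ (δ/8)) ⊆ Metric.cthickening δ C := by
      intro x hx
      obtain ⟨t₀, ht₀, hxt₀⟩ := Set.mem_iUnion₂.mp hx
      have h1 : Metric.closedBall t₀ (δ/8) ⊆ Metric.closedBall t₀ δ :=
        Metric.closedBall_subset_closedBall (by linarith)
      exact Metric.closedBall_subset_cthickening (hsC t₀ ht₀) δ (h1 hxt₀)
    calc (s.card : ℝ≥0∞) * (ENNReal.ofReal ((δ/8)^n) * B)
        = ∑ t₀ ∈ s, volume (Metric.closedBall t₀ (δ/8)) := by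
          rw [Finset.sum_congr rfl (fun t₀ _ => hball t₀), Finset.sum_const, nsmul_eq_mul]
      _ = volume (⋃ t₀ ∈ s, Metric.closedBall t₀ (δ/8)) :=
          (measure_biUnion_finset hdisj (fun t₀ _ => measurableSet_closedBall)).symm
      _ ≤ volume (Metric.cthickening δ C) := measure_mono hsubset
  -- final arithmetic
  have hkey : Br / (8^n * 2^k * Kr) * m * δ^2 ≤ (s.card : ℝ) * ((δ/8)^n * Br) := by
    have hδk : (0:ℝ) < δ^k := by positivity
    have hδn : δ^n = δ^k * δ^2 := by rw [← pow_add, hk2]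
    have h2δ : (2*δ)^k = 2^k * δ^k := by rw [mul_pow]
    calc Br / (8^n * 2^k * Kr) * m * δ^2
        = m * (Br * δ^2 / (8^n * 2^k * Kr)) := by ring
      _ ≤ (s.card * ((2*δ)^k * Kr)) * (Br * δ^2 / (8^n * 2^k * Kr)) := by
          apply mul_le_mul_of_nonneg_right hNreal (by positivity)
      _ = (s.card : ℝ) * ((δ/8)^n * Br) := by
          rw [h2δ, div_pow, hδn]
          field_simp
  calc ENNReal.ofReal (Br / (8^n * 2^k * Kr) * m * δ^2)
      ≤ ENNReal.ofReal ((s.card : ℝ) * ((δ/8)^n * Br)) := ENNReal.ofReal_le_ofReal hkey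
    _ = (s.card : ℝ≥0∞) * (ENNReal.ofReal ((δ/8)^n) * ENNReal.ofReal Br) := by
        rw [ENNReal.ofReal_mul (Nat.cast_nonneg _), ENNReal.ofReal_natCast,
          ENNReal.ofReal_mul (by positivity)]
    _ = (s.card : ℝ≥0∞) * (ENNReal.ofReal ((δ/8)^n) * B) := by
        rw [hBr_def, ENNReal.ofReal_toReal hBtop]
    _ ≤ volume (Metric.cthickening δ C) := hvol
end
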